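/- Let S₀ ⊆ ℝ^n be a closed connected set and let S be a connected component of ℝ^n \ S₀. Then the boundary ∂S is connected. -/

import Mathlib

open Set Metric Complex

section Lifting

lemma aux_int_subsingleton {t : Set ℝ} (ht : IsPreconnected t)
    (h : t ⊆ Set.range ((↑) : ℤ → ℝ)) : t.Subsingleton := by
  intro a ha b hb
  by_contra hne
  wlog hab : a < b generalizing a b with H
  · exact H hb ha (Ne.symm hne) (lt_of_le_of_ne (not_lt.mp hab) (Ne.symm hne))
  obtain ⟨p, rfl⟩ := h ha
  obtain ⟨q, rfl⟩ := h hb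
  have hpq : p < q := by exact_mod_cast hab
  have hc : (p : ℝ) + 1/2 ∈ Set.Icc (p:ℝ) (q:ℝ) := by
    constructor
    · linarith
    · have : (p : ℝ) + 1 ≤ q := by exact_mod_cast hpq
      linarith
  obtain ⟨r, hr⟩ := h (ht.Icc_subset ha hb hc)
  have : (2*r : ℝ) = 2*p + 1 := by push_cast [hr]; linarith
  have h2 : (2*r : ℤ) = 2*p + 1 := by exact_mod_cast this
  omega

lemma aux_lift_sub_int {a b : ℝ} (h : Complex.exp (a * I) = Complex.exp (b * I)) :
    ∃ m : ℤ, a - b = 2 * Real.pi * m := by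
  have h1 : Complex.exp (((a - b : ℝ) : ℂ) * I) = 1 := by
    push_cast
    rw [sub_mul, Complex.exp_sub, h, div_self (Complex.exp_ne_zero _)]
  rw [Complex.exp_eq_one_iff] at h1
  obtain ⟨m, hm⟩ := h1
  refine ⟨m, ?_⟩
  have hI : ((a - b : ℝ) : ℂ) = 2 * Real.pi * m := by
    apply mul_right_cancel₀ Complex.I_ne_zero
    rw [hm]; ring
  exact_mod_cast hI

lemma aux_mem_range {a b : ℝ} (h : Complex.exp (a * I) = Complex.exp (b * I)) :
    (a - b) / (2 * Real.pi) ∈ Set.range ((↑) : ℤ → ℝ) := by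
  obtain ⟨m, hm⟩ := aux_lift_sub_int h
  refine ⟨m, ?_⟩
  have hh : (a - b) / (2*Real.pi) = m := by rw [hm]; field_simp
  exact hh.symm

lemma aux_ratio (a b : ℂ) (ha : ‖a‖ = 1) (hb : ‖b‖ = 1)
    (hd : dist a b < 1) : a / b ∈ Complex.slitPlane ∧
      Complex.exp (((a/b).arg : ℝ) * I) * b = a := by
  have hb0 : b ≠ 0 := by intro h; rw [h] at hb; simp at hb
  have habs : ‖a/b‖ = 1 := by rw [norm_div, ha, hb]; norm_num
  have hsub : ‖a/b - 1‖ < 1 := by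
    have : a/b - 1 = (a - b)/b := by field_simp
    rw [this, norm_div, hb, div_one]
    rwa [Complex.dist_eq] at hd
  have hre : 0 < (a/b).re := by
    have h1 : |(a/b - 1).re| ≤ ‖a/b - 1‖ := Complex.abs_re_le_norm _
    have h2 : (a/b - 1).re = (a/b).re - 1 := by simp
    rw [h2] at h1
    have := abs_le.mp h1
    linarith [this.1]
  refine ⟨Complex.mem_slitPlane_iff.mpr (Or.inl hre), ?_⟩
  have := Complex.norm_mul_exp_arg_mul_I (a/b)
  rw [habs] at this
  simp only [Complex.ofReal_one, one_mul] at this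
  rw [this, div_mul_cancel₀ _ hb0]

variable {E : Type*} [NormedAddCommGroup E] [NormedSpace ℝ E] [ProperSpace E]

lemma aux_lift_ball (f : E → ℂ) (hf : Continuous f) (habs : ∀ z, ‖f z‖ = 1)
    (R : ℝ) : ∃ φ : E → ℝ, ContinuousOn φ (closedBall 0 R) ∧
      (∀ z ∈ closedBall 0 R, Complex.exp ((φ z : ℝ) * I) = f z) ∧ φ 0 = (f 0).arg := by
  set g : ℝ × E → ℂ := fun p => f (p.1 • p.2) with hg
  have hgc : Continuous g := hf.comp (continuous_fst.smul continuous_snd)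
  set K : Set (ℝ × E) := Set.Icc (0:ℝ) 1 ×ˢ closedBall (0:E) R with hK
  have hKc : IsCompact K := isCompact_Icc.prod (isCompact_closedBall _ _)
  have huc := hKc.uniformContinuousOn_of_continuous hgc.continuousOn
  rw [Metric.uniformContinuousOn_iff] at huc
  obtain ⟨δ, hδ, hδ'⟩ := huc 1 one_pos
  obtain ⟨m, hm⟩ := exists_nat_one_div_lt hδ
  set M : ℕ := m + 1 with hM
  have hM0 : (M : ℝ) ≠ 0 := by positivity
  have key : ∀ z ∈ closedBall (0:E) R, ∀ j : ℕ, j < M →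
      dist (f ((((j:ℝ)+1)/M) • z)) (f (((j:ℝ)/M) • z)) < 1 := by
    intro z hz j hj
    have hj1 : ((j:ℝ)+1)/M ∈ Set.Icc (0:ℝ) 1 := by
      constructor
      · positivity
      · rw [div_le_one (by positivity)]
        exact_mod_cast Nat.succ_le_of_lt hj
    have hj2 : (j:ℝ)/M ∈ Set.Icc (0:ℝ) 1 := by
      constructor
      · positivity
      · rw [div_le_one (by positivity)]
        exact_mod_cast le_of_lt hj
    have := hδ' (((j:ℝ)+1)/M, z) (Set.mk_mem_prod hj1 hz) ((j:ℝ)/M, z)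
      (Set.mk_mem_prod hj2 hz) ?_
    · exact this
    · rw [Prod.dist_eq]
      simp only [dist_self, max_eq_left dist_nonneg]
      rw [Real.dist_eq]
      have : ((j:ℝ)+1)/M - (j:ℝ)/M = 1/M := by field_simp; ring
      rw [this, abs_of_pos (by positivity)]
      calc (1:ℝ)/M ≤ 1/(m+1) := by
            apply div_le_div_of_nonneg_left one_pos.le (by positivity)
            exact_mod_cast le_refl M
        _ < δ := hm
  set a : ℕ → E → ℝ := fun j z => ((f ((((j:ℝ)+1)/M) • z)) / (f (((j:ℝ)/M) • z))).arg with ha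
  set φ : E → ℝ := fun z => (f 0).arg + ∑ j ∈ Finset.range M, a j z with hφ
  have hfne : ∀ w : E, f w ≠ 0 := by
    intro w h
    have := habs w
    rw [h] at this; simp at this
  refine ⟨φ, ?_, ?_, ?_⟩
  · intro z hz
    apply ContinuousAt.continuousWithinAt
    apply ContinuousAt.add continuousAt_const
    apply tendsto_finset_sum
    intro j hj
    have hrat := aux_ratio _ _ (habs ((((j:ℝ)+1)/M) • z)) (habs (((j:ℝ)/M) • z))
      (key z hz j (Finset.mem_range.mp hj))
    have hc1 : ContinuousAt (fun w : E => (f ((((j:ℝ)+1)/M) • w)) / (f (((j:ℝ)/M) • w))) z :=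
      ((hf.comp (continuous_const_smul (((j:ℝ)+1)/M : ℝ))).continuousAt).div
        ((hf.comp (continuous_const_smul ((j:ℝ)/M : ℝ))).continuousAt) (hfne _)
    exact ContinuousAt.comp (g := Complex.arg)
      (f := fun w : E => (f ((((j:ℝ)+1)/M) • w)) / (f (((j:ℝ)/M) • w)))
      (Complex.continuousAt_arg hrat.1) hc1
  · intro z hz
    have main : ∀ k : ℕ, k ≤ M →
        Complex.exp ((((f 0).arg + ∑ j ∈ Finset.range k, a j z : ℝ)) * I)
          = f (((k:ℝ)/M) • z) := by
      intro k hk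
      induction k with
      | zero =>
          simp only [Finset.range_zero, Finset.sum_empty, add_zero, Nat.cast_zero,
            zero_div, zero_smul]
          have := Complex.norm_mul_exp_arg_mul_I (f 0)
          rw [habs 0] at this
          simpa using this
      | succ k ih =>
          have hk' : k ≤ M := Nat.le_of_succ_le hk
          have hkM : k < M := hk
          have hrat := aux_ratio _ _ (habs ((((k:ℝ)+1)/M) • z)) (habs (((k:ℝ)/M) • z))
            (key z hz k hkM)
          rw [Finset.sum_range_succ]
          have : (((f 0).arg + (∑ j ∈ Finset.range k, a j z + a k z) : ℝ) : ℂ)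
              = (((f 0).arg + ∑ j ∈ Finset.range k, a j z : ℝ) : ℂ) + ((a k z : ℝ) : ℂ) := by
            push_cast; ring
          rw [this, add_mul, Complex.exp_add, ih hk']
          rw [mul_comm]
          rw [show (((k+1 : ℕ) : ℝ)/M) = (((k:ℝ)+1)/M) by push_cast; ring]
          exact hrat.2
    have := main M le_rfl
    rwa [div_self hM0, one_smul] at this
  · simp only [hφ]
    have : ∀ j ∈ Finset.range M, a j 0 = 0 := by
      intro j _
      simp only [ha, smul_zero, div_self (hfne 0), Complex.arg_one]
    rw [Finset.sum_congr rfl this]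
    simp

lemma aux_lift_unique {s : Set E} (hs : IsPreconnected s) {φ ψ : E → ℝ}
    (hφ : ContinuousOn φ s) (hψ : ContinuousOn ψ s)
    (h : ∀ z ∈ s, Complex.exp ((φ z : ℝ) * I) = Complex.exp ((ψ z : ℝ) * I))
    {z₀ : E} (hz₀ : z₀ ∈ s) (hval : φ z₀ = ψ z₀) : Set.EqOn φ ψ s := by
  set w : E → ℝ := fun z => (φ z - ψ z) / (2 * Real.pi) with hw
  have hwc : ContinuousOn w s := (hφ.sub hψ).div_const _
  have hrange : w '' s ⊆ Set.range ((↑) : ℤ → ℝ) := by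
    rintro - ⟨z, hz, rfl⟩
    exact aux_mem_range (h z hz)
  have hsub := aux_int_subsingleton (hs.image w hwc) hrange
  intro z hz
  have h0 : w z₀ = 0 := by rw [hw]; simp [hval]
  have := hsub (Set.mem_image_of_mem w hz) (Set.mem_image_of_mem w hz₀)
  rw [h0] at this
  have hne : (2 * Real.pi) ≠ 0 := by positivity
  rcases div_eq_zero_iff.mp this with h' | h'
  · linarith [sub_eq_zero.mp h']
  · exact absurd h' hne

lemma aux_lift_global (f : E → ℂ) (hf : Continuous f) (habs : ∀ z, ‖f z‖ = 1) :
    ∃ φ : E → ℝ, Continuous φ ∧ ∀ z, Complex.exp ((φ z : ℝ) * I) = f z := by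
  choose φ hcont hlift h0 using fun k : ℕ => aux_lift_ball f hf habs k
  have agree : ∀ j k : ℕ, ∀ z : E, ‖z‖ ≤ j → ‖z‖ ≤ k → φ j z = φ k z := by
    intro j k z hj hk
    have hm : (0:ℝ) ≤ min (j:ℝ) k := le_min (by positivity) (by positivity)
    have hconv : Convex ℝ (closedBall (0:E) (min (j:ℝ) k)) := convex_closedBall _ _
    have hpre : IsPreconnected (closedBall (0:E) (min (j:ℝ) k)) := hconv.isPreconnected
    have hsub1 : closedBall (0:E) (min (j:ℝ) k) ⊆ closedBall 0 j :=
      closedBall_subset_closedBall (min_le_left _ _)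
    have hsub2 : closedBall (0:E) (min (j:ℝ) k) ⊆ closedBall 0 k :=
      closedBall_subset_closedBall (min_le_right _ _)
    have h0mem : (0:E) ∈ closedBall (0:E) (min (j:ℝ) k) := mem_closedBall_self hm
    have := aux_lift_unique hpre ((hcont j).mono hsub1) ((hcont k).mono hsub2)
      (fun z hz => by rw [hlift j z (hsub1 hz), hlift k z (hsub2 hz)]) h0mem
      (by rw [h0 j, h0 k])
    exact this (by simpa [mem_closedBall, dist_eq_norm] using le_min hj hk)
  refine ⟨fun z => φ ⌈‖z‖⌉₊ z, ?_, ?_⟩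
  · rw [continuous_iff_continuousAt]
    intro z₀
    set k : ℕ := ⌈‖z₀‖⌉₊ + 1 with hk
    have hz₀k : ‖z₀‖ < k := lt_of_le_of_lt (Nat.le_ceil _) (by exact_mod_cast Nat.lt_succ_self _)
    have hmem : closedBall (0:E) k ∈ nhds z₀ := by
      rw [_root_.mem_nhds_iff]
      exact ⟨ball 0 k, ball_subset_closedBall, isOpen_ball,
        by simpa [mem_ball, dist_eq_norm] using hz₀k⟩
    have hck : ContinuousAt (φ k) z₀ := (hcont k).continuousAt hmem
    apply hck.congr
    have hev : ∀ᶠ z in nhds z₀, ‖z‖ < k :=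
      (continuous_norm.continuousAt).eventually_lt continuousAt_const hz₀k
    filter_upwards [hev] with z hz
    exact agree k ⌈‖z‖⌉₊ z hz.le (Nat.le_ceil _)
  · intro z
    exact hlift _ z (by simpa [mem_closedBall, dist_eq_norm] using Nat.le_ceil _)

end Lifting

section Components

variable {X : Type*} [TopologicalSpace X] [LocallyConnectedSpace X]

lemma aux_closure_component {U : Set X} (hU : IsOpen U) (y : X) :
    closure (connectedComponentIn U y) ∩ U ⊆ connectedComponentIn U y := by
  rintro z ⟨hzc, hzU⟩
  by_cases hyU : y ∈ U
  · set C := connectedComponentIn U y with hC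
    have hzopen : IsOpen (connectedComponentIn U z) := hU.connectedComponentIn
    have hznhds : connectedComponentIn U z ∈ nhds z :=
      hzopen.mem_nhds (mem_connectedComponentIn hzU)
    obtain ⟨w, hw1, hw2⟩ := mem_closure_iff_nhds.mp hzc _ hznhds
    have hunion : IsPreconnected (connectedComponentIn U z ∪ C) :=
      (isPreconnected_connectedComponentIn).union w hw1 hw2
        isPreconnected_connectedComponentIn
    have hsub : connectedComponentIn U z ∪ C ⊆ U :=
      Set.union_subset (connectedComponentIn_subset _ _) (connectedComponentIn_subset _ _)
    have := hunion.subset_connectedComponentIn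
      (Set.mem_union_right _ (mem_connectedComponentIn hyU)) hsub
    exact this (Set.mem_union_left _ (mem_connectedComponentIn hzU))
  · simp [connectedComponentIn_eq_empty hyU] at hzc

lemma aux_closure_component_subset {U : Set X} (hU : IsOpen U) (y : X) :
    closure (connectedComponentIn U y) ⊆ connectedComponentIn U y ∪ Uᶜ := by
  intro z hz
  by_cases hzU : z ∈ U
  · exact Or.inl (aux_closure_component hU y ⟨hz, hzU⟩)
  · exact Or.inr hzU

lemma aux_closure_meets [PreconnectedSpace X] {U : Set X} (hU : IsOpen U)
    (hUc : Uᶜ.Nonempty) {y : X} (hy : y ∈ U) :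
    (closure (connectedComponentIn U y) ∩ Uᶜ).Nonempty := by
  by_contra h
  rw [Set.not_nonempty_iff_eq_empty] at h
  set C := connectedComponentIn U y with hC
  have hclU : closure C ⊆ U := by
    intro z hz
    by_contra hzU
    have : z ∈ closure C ∩ Uᶜ := ⟨hz, hzU⟩
    rw [h] at this
    exact this
  have hclosed : IsClosed C := by
    rw [← closure_subset_iff_isClosed]
    intro z hz
    exact aux_closure_component hU y ⟨hz, hclU hz⟩
  have hopen : IsOpen C := hU.connectedComponentIn
  have hne : C.Nonempty := ⟨y, mem_connectedComponentIn hy⟩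
  have huniv : C = Set.univ := IsClopen.eq_univ ⟨hclosed, hopen⟩ hne
  obtain ⟨w, hw⟩ := hUc
  apply hw
  apply connectedComponentIn_subset U y
  rw [← hC, huniv]
  exact Set.mem_univ w

end Components

/-- If `S₀ ⊆ ℝⁿ` is closed and connected and `S` is a connected component of its
complement, then the boundary of `S` is connected. -/
theorem frontier_connectedComponentIn_connected (n : ℕ)
    (S₀ : Set (EuclideanSpace ℝ (Fin n))) (hS₀ : IsClosed S₀) (hconn : IsPreconnected S₀)
    (x : EuclideanSpace ℝ (Fin n)) (hx : x ∉ S₀) :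
    IsPreconnected (frontier (connectedComponentIn S₀ᶜ x)) := by
  classical
  set U : Set (EuclideanSpace ℝ (Fin n)) := S₀ᶜ with hUdef
  have hU : IsOpen U := hS₀.isOpen_compl
  have hxU : x ∈ U := hx
  set S := connectedComponentIn U x with hSdef
  have hSopen : IsOpen S := hU.connectedComponentIn
  have hSsub : S ⊆ U := connectedComponentIn_subset _ _
  have hfr : frontier S = closure S \ S := hSopen.frontier_eq
  have hfrS₀ : frontier S ⊆ S₀ := by
    intro z hz
    rw [hfr] at hz
    by_contra hzS₀
    exact hz.2 (aux_closure_component hU x ⟨hz.1, hzS₀⟩)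
  rcases Set.eq_empty_or_nonempty S₀ with h0 | hS₀ne
  · have : frontier S = ∅ := Set.subset_empty_iff.mp (h0 ▸ hfrS₀)
    rw [this]
    exact isPreconnected_empty
  -- the complement of S is preconnected
  have hScS₀ : S₀ ⊆ Sᶜ := fun z hz hzS => (hSsub hzS) hz
  have hBpre : IsPreconnected Sᶜ := by
    obtain ⟨z₀, hz₀⟩ := hS₀ne
    have hUcS₀ : Uᶜ = S₀ := by simp [hUdef]
    have hSc : Sᶜ = ⋃₀ { T | ∃ y ∈ Sᶜ, T = S₀ ∪ closure (connectedComponentIn U y) } := by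
      ext z
      constructor
      · intro hz
        refine ⟨S₀ ∪ closure (connectedComponentIn U z), ⟨z, hz, rfl⟩, ?_⟩
        by_cases hzU : z ∈ U
        · exact Or.inr (subset_closure (mem_connectedComponentIn hzU))
        · exact Or.inl (by simpa [hUdef] using hzU)
      · rintro ⟨T, ⟨y, hy, rfl⟩, hz⟩
        rcases hz with hz | hz
        · exact hScS₀ hz
        · by_cases hyU : y ∈ U
          · rcases aux_closure_component_subset hU y hz with h | h
            · intro hzS
              have e1 : connectedComponentIn U y = connectedComponentIn U z :=
                connectedComponentIn_eq h
              have e2 : connectedComponentIn U x = connectedComponentIn U z :=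
                connectedComponentIn_eq hzS
              apply hy
              rw [hSdef, e2, ← e1]
              exact mem_connectedComponentIn hyU
            · rw [hUcS₀] at h
              exact hScS₀ h
          · rw [connectedComponentIn_eq_empty hyU] at hz
            simp at hz
    rw [hSc]
    apply isPreconnected_sUnion z₀
    · rintro T ⟨y, hy, rfl⟩
      exact Or.inl hz₀
    · rintro T ⟨y, hy, rfl⟩
      by_cases hyU : y ∈ U
      · obtain ⟨w, hw1, hw2⟩ := aux_closure_meets hU
          (⟨z₀, by rw [hUcS₀]; exact hz₀⟩ : (Uᶜ).Nonempty) hyU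
        rw [hUcS₀] at hw2
        exact IsPreconnected.union w hw2 hw1 hconn
          isPreconnected_connectedComponentIn.closure
      · rw [connectedComponentIn_eq_empty hyU]
        simpa using hconn
  -- suppose the frontier is disconnected
  by_contra hnc
  rw [IsPreconnected] at hnc
  push_neg at hnc
  obtain ⟨o₁, o₂, ho₁, ho₂, hcov, hne₁, hne₂, htriple⟩ := hnc
  set F := frontier S with hF
  set P : Set (EuclideanSpace ℝ (Fin n)) := F \ o₂ with hP
  set Q : Set (EuclideanSpace ℝ (Fin n)) := F \ o₁ with hQ
  have hPclosed : IsClosed P := isClosed_frontier.sdiff ho₂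
  have hQclosed : IsClosed Q := isClosed_frontier.sdiff ho₁
  have hPQdisj : Disjoint P Q := by
    rw [Set.disjoint_left]
    rintro z ⟨hzF, hzo₂⟩ ⟨_, hzo₁⟩
    rcases hcov hzF with h | h
    · exact hzo₁ h
    · exact hzo₂ h
  have hPQcover : F = P ∪ Q := by
    ext z
    constructor
    · intro hz
      rcases hcov hz with h | h
      · left
        refine ⟨hz, fun h2 => ?_⟩
        have : z ∈ F ∩ (o₁ ∩ o₂) := ⟨hz, h, h2⟩
        rw [htriple] at this
        exact this
      · right
        refine ⟨hz, fun h1 => ?_⟩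
        have : z ∈ F ∩ (o₁ ∩ o₂) := ⟨hz, h1, h⟩
        rw [htriple] at this
        exact this
    · rintro (⟨hz, _⟩ | ⟨hz, _⟩) <;> exact hz
  obtain ⟨p, hpF, hpo₁⟩ := hne₁
  obtain ⟨q, hqF, hqo₂⟩ := hne₂
  have hpP : p ∈ P := ⟨hpF, fun h2 => by
    have : p ∈ F ∩ (o₁ ∩ o₂) := ⟨hpF, hpo₁, h2⟩
    rw [htriple] at this; exact this⟩
  have hqQ : q ∈ Q := ⟨hqF, fun h1 => by
    have : q ∈ F ∩ (o₁ ∩ o₂) := ⟨hqF, h1, hqo₂⟩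
    rw [htriple] at this; exact this⟩
  -- Urysohn function
  obtain ⟨g, hg0, hg1, -⟩ := exists_continuous_zero_one_of_isClosed hPclosed hQclosed hPQdisj
  set h : EuclideanSpace ℝ (Fin n) → ℝ := fun z => Real.pi * g z with hh
  have hhc : Continuous h := continuous_const.mul g.continuous
  have hagree : ∀ z ∈ F, Complex.exp ((h z : ℝ) * I) = Complex.exp (((-(h z) : ℝ) : ℂ) * I) := by
    intro z hz
    rw [hPQcover] at hz
    rcases hz with hz | hz
    · have : g z = 0 := hg0 hz
      simp [hh, this]
    · have : g z = 1 := hg1 hz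
      have hπ : h z = Real.pi := by simp [hh, this]
      rw [hπ]
      push_cast
      rw [Complex.exp_pi_mul_I, neg_mul, Complex.exp_neg, Complex.exp_pi_mul_I]
      norm_num
  set f : EuclideanSpace ℝ (Fin n) → ℂ := fun z =>
    if z ∈ closure S then Complex.exp ((h z : ℝ) * I) else Complex.exp (((-(h z) : ℝ) : ℂ) * I)
    with hf
  have hfc : Continuous f := by
    apply Continuous.if
    · intro a ha
      have : a ∈ frontier (closure S) := by simpa using ha
      exact hagree a (frontier_closure_subset this)
    · exact Complex.continuous_exp.comp ((Complex.continuous_ofReal.comp hhc).mul continuous_const)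
    · exact Complex.continuous_exp.comp
        ((Complex.continuous_ofReal.comp hhc.neg).mul continuous_const)
  have habs : ∀ z, ‖f z‖ = 1 := by
    intro z
    simp only [hf]
    split_ifs <;> rw [Complex.norm_exp] <;> simp
  obtain ⟨φ, hφc, hφ⟩ := aux_lift_global f hfc habs
  -- on the closure of S
  have hA : IsPreconnected (closure S) := isPreconnected_connectedComponentIn.closure
  have hpA : p ∈ closure S := (hfr ▸ hpF).1
  have hqA : q ∈ closure S := (hfr ▸ hqF).1
  have hpB : p ∈ Sᶜ := (hfr ▸ hpF).2
  have hqB : q ∈ Sᶜ := (hfr ▸ hqF).2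
  have hgp : g p = 0 := hg0 hpP
  have hgq : g q = 1 := hg1 hqQ
  set w₁ : EuclideanSpace ℝ (Fin n) → ℝ := fun z => (φ z - h z) / (2 * Real.pi) with hw₁
  have hw₁c : Continuous w₁ := (hφc.sub hhc).div_const _
  have himg₁ : w₁ '' closure S ⊆ Set.range ((↑) : ℤ → ℝ) := by
    rintro - ⟨z, hz, rfl⟩
    apply aux_mem_range
    rw [hφ z]
    simp only [hf]
    rw [if_pos hz]
  have hsub₁ := aux_int_subsingleton (hA.image w₁ hw₁c.continuousOn) himg₁
  have e₁ : w₁ p = w₁ q :=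
    hsub₁ (Set.mem_image_of_mem w₁ hpA) (Set.mem_image_of_mem w₁ hqA)
  -- on the complement of S
  set w₂ : EuclideanSpace ℝ (Fin n) → ℝ := fun z => (φ z - (-(h z))) / (2 * Real.pi) with hw₂
  have hw₂c : Continuous w₂ := (hφc.sub hhc.neg).div_const _
  have hfB : ∀ z ∈ Sᶜ, f z = Complex.exp (((-(h z) : ℝ) : ℂ) * I) := by
    intro z hz
    by_cases hzc : z ∈ closure S
    · have hzF : z ∈ F := hfr ▸ ⟨hzc, hz⟩
      simp only [hf, if_pos hzc]
      exact hagree z hzF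
    · simp only [hf, if_neg hzc]
  have himg₂ : w₂ '' Sᶜ ⊆ Set.range ((↑) : ℤ → ℝ) := by
    rintro - ⟨z, hz, rfl⟩
    apply aux_mem_range
    rw [hφ z, hfB z hz]
  have hsub₂ := aux_int_subsingleton (hBpre.image w₂ hw₂c.continuousOn) himg₂
  have e₂ : w₂ p = w₂ q :=
    hsub₂ (Set.mem_image_of_mem w₂ hpB) (Set.mem_image_of_mem w₂ hqB)
  -- derive the contradiction
  have hπ : (0:ℝ) < Real.pi := Real.pi_pos
  have hhp : h p = 0 := by simp [hh, hgp]
  have hhq : h q = Real.pi := by simp [hh, hgq]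
  rw [hw₁] at e₁
  rw [hw₂] at e₂
  simp only [hhp, hhq] at e₁ e₂
  have hne : (2 * Real.pi) ≠ 0 := by positivity
  have l₁ : φ p - 0 = φ q - Real.pi := by
    field_simp at e₁
    linarith
  have l₂ : φ p - (-0) = φ q - (-Real.pi) := by
    field_simp at e₂
    linarith
  linarith
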